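/- For every semi-centroid clustering instance with arbitrary nonnegative loss functions ℓ_i, there exists a clustering that is 1-FJR. -/

import Mathlib

open Finset

/-- A pseudometric on a set `X`, valued in `ℝ≥0`. -/
def IsPseudometric {X : Type*} (d : X → X → NNReal) : Prop :=
  (∀ x, d x x = 0) ∧ (∀ x y, d x y = d y x) ∧ (∀ x y z, d x y ≤ d x z + d z y)

/-- A clustering: `k` clusters `(part t, cent t)` whose member sets partition the agents. -/
structure Clustering (N M : Type*) (k : ℕ) where
  part : Fin k → Finset N
  cent : Fin k → M
  partition : ∀ i : N, ∃! t : Fin k, i ∈ part t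

/-- The (unique) index of the cluster containing agent `i`. -/
noncomputable def Clustering.idx {N M : Type*} {k : ℕ} (X : Clustering N M k) (i : N) :
    Fin k :=
  (X.partition i).exists.choose

/-- The loss of agent `i` under clustering `X`, for loss functions `l`. -/
noncomputable def Clustering.loss {N M : Type*} {k : ℕ} (X : Clustering N M k)
    (l : N → Finset N → M → ℝ) (i : N) : ℝ :=
  l i (X.part (X.idx i)) (X.cent (X.idx i))

/-- `X` is in the `α`-core: no group `S` with `|S| ≥ n/k` and center `y` such that
`α·ℓ_i(S,y) < ℓ_i(X)` for every `i ∈ S`. -/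
def InCore {N M : Type*} [Fintype N] {k : ℕ} (X : Clustering N M k)
    (l : N → Finset N → M → ℝ) (α : ℝ) : Prop :=
  ¬ ∃ (S : Finset N) (y : M), (Fintype.card N : ℝ) / (k : ℝ) ≤ (S.card : ℝ) ∧
      ∀ i ∈ S, α * l i S y < X.loss l i

/-- `X` is `α`-FJR: no group `S` with `|S| ≥ n/k` and center `y` such that
`α·ℓ_i(S,y) < min_{j∈S} ℓ_j(X)` for every `i ∈ S`. -/
def IsFJR {N M : Type*} [Fintype N] {k : ℕ} (X : Clustering N M k)
    (l : N → Finset N → M → ℝ) (α : ℝ) : Prop :=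
  ¬ ∃ (S : Finset N) (y : M), (Fintype.card N : ℝ) / (k : ℝ) ≤ (S.card : ℝ) ∧
      ∀ i ∈ S, ∀ j ∈ S, α * l i S y < X.loss l j

set_option linter.unusedSectionVars false
set_option linter.unusedVariables false
open Finset

section Dev
variable {N M : Type*} [DecidableEq N] [Fintype M] [Nonempty M]

open Classical in
noncomputable def cands (θ : ℝ) (R : Finset N) : Finset (Finset N × M) :=
  (R.powerset ×ˢ (Finset.univ : Finset M)).filter (fun p => p.1.Nonempty ∧ θ ≤ p.1.card)

lemma mem_cands {θ : ℝ} {R : Finset N} {p : Finset N × M} :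
    p ∈ cands θ R ↔ p.1 ⊆ R ∧ p.1.Nonempty ∧ θ ≤ (p.1.card : ℝ) := by
  classical
  simp [cands, Finset.mem_filter, Finset.mem_powerset, Finset.mem_product, and_assoc]

noncomputable def gmax (l : N → Finset N → M → ℝ) (p : Finset N × M) : ℝ :=
  if h : p.1.Nonempty then p.1.sup' h (fun i => l i p.1 p.2) else 0

noncomputable def pick (l : N → Finset N → M → ℝ) (θ : ℝ) (R : Finset N)
    (hc : (cands (M := M) θ R).Nonempty) : Finset N × M :=
  (Finset.exists_min_image (cands θ R) (gmax l) hc).choose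

lemma pick_mem (l : N → Finset N → M → ℝ) (θ : ℝ) (R : Finset N)
    (hc : (cands (M := M) θ R).Nonempty) : pick l θ R hc ∈ cands θ R :=
  (Finset.exists_min_image (cands θ R) (gmax l) hc).choose_spec.1

lemma pick_min (l : N → Finset N → M → ℝ) (θ : ℝ) (R : Finset N)
    (hc : (cands (M := M) θ R).Nonempty) : ∀ q ∈ cands θ R, gmax l (pick l θ R hc) ≤ gmax l q :=
  (Finset.exists_min_image (cands θ R) (gmax l) hc).choose_spec.2

noncomputable def greedy (l : N → Finset N → M → ℝ) (θ : ℝ) (R : Finset N) :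
    List (Finset N × M) :=
  if hR : R = ∅ then []
  else if hc : (cands (M := M) θ R).Nonempty then
    pick l θ R hc :: greedy l θ (R \ (pick l θ R hc).1)
  else [(R, Classical.arbitrary M)]
termination_by R.card
decreasing_by
  have h := mem_cands.mp (pick_mem l θ R hc)
  exact Finset.card_lt_card (Finset.sdiff_ssubset h.1 h.2.1)


variable {l : N → Finset N → M → ℝ} {θ : ℝ}

lemma greedy_subset : ∀ R : Finset N, ∀ p ∈ greedy l θ R, p.1 ⊆ R := by
  intro R
  induction R using Finset.strongInduction with
  | _ R ih =>
    rw [greedy]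
    by_cases hR : R = ∅
    · simp [hR]
    · rw [dif_neg hR]
      by_cases hc : (cands (M := M) θ R).Nonempty
      · rw [dif_pos hc]
        intro p hp
        rcases List.mem_cons.mp hp with h | h
        · subst h; exact (mem_cands.mp (pick_mem l θ R hc)).1
        · have hsub := (mem_cands.mp (pick_mem l θ R hc)).1
          have hss := Finset.sdiff_ssubset hsub (mem_cands.mp (pick_mem l θ R hc)).2.1
          exact (ih _ hss p h).trans Finset.sdiff_subset
      · rw [dif_neg hc]
        intro p hp
        simp only [List.mem_singleton] at hp
        subst hp; exact subset_rfl

lemma greedy_cover (i : N) : ∀ R : Finset N, (∃ p ∈ greedy l θ R, i ∈ p.1) ↔ i ∈ R := by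
  intro R
  induction R using Finset.strongInduction with
  | _ R ih =>
    rw [greedy]
    by_cases hR : R = ∅
    · simp [hR]
    · rw [dif_neg hR]
      by_cases hc : (cands (M := M) θ R).Nonempty
      · rw [dif_pos hc]
        have hm := mem_cands.mp (pick_mem l θ R hc)
        have hss := Finset.sdiff_ssubset hm.1 hm.2.1
        constructor
        · rintro ⟨p, hp, hip⟩
          rcases List.mem_cons.mp hp with h | h
          · subst h; exact hm.1 hip
          · exact Finset.sdiff_subset ((ih _ hss).mp ⟨p, h, hip⟩)
        · intro hiR
          by_cases hip : i ∈ (pick l θ R hc).1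
          · exact ⟨_, List.mem_cons_self, hip⟩
          · obtain ⟨p, hp, h⟩ := (ih _ hss).mpr (Finset.mem_sdiff.mpr ⟨hiR, hip⟩)
            exact ⟨p, List.mem_cons_of_mem _ hp, h⟩
      · rw [dif_neg hc]; simp

lemma greedy_pairwise : ∀ R : Finset N,
    (greedy l θ R).Pairwise (fun p q => Disjoint p.1 q.1) := by
  intro R
  induction R using Finset.strongInduction with
  | _ R ih =>
    rw [greedy]
    by_cases hR : R = ∅
    · simp [hR]
    · rw [dif_neg hR]
      by_cases hc : (cands (M := M) θ R).Nonempty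
      · rw [dif_pos hc]
        have hm := mem_cands.mp (pick_mem l θ R hc)
        have hss := Finset.sdiff_ssubset hm.1 hm.2.1
        refine List.Pairwise.cons ?_ (ih _ hss)
        intro q hq
        have : q.1 ⊆ R \ (pick l θ R hc).1 := greedy_subset _ q hq
        exact Finset.disjoint_left.mpr fun a ha hb =>
          (Finset.mem_sdiff.mp (this hb)).2 ha
      · rw [dif_neg hc]; simp

lemma greedy_length (hθ : 0 < θ) : ∀ R : Finset N,
    θ * (greedy l θ R).length < (R.card : ℝ) + θ := by
  intro R
  induction R using Finset.strongInduction with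
  | _ R ih =>
    rw [greedy]
    by_cases hR : R = ∅
    · simp [hR, hθ]
    · rw [dif_neg hR]
      by_cases hc : (cands (M := M) θ R).Nonempty
      · rw [dif_pos hc]
        have hm := mem_cands.mp (pick_mem l θ R hc)
        have hss := Finset.sdiff_ssubset hm.1 hm.2.1
        have IH := ih _ hss
        have hcard : ((R \ (pick l θ R hc).1).card : ℝ)
            = (R.card : ℝ) - ((pick l θ R hc).1.card : ℝ) := by
          rw [Finset.card_sdiff_of_subset hm.1]
          have := Finset.card_le_card hm.1
          push_cast [Nat.cast_sub this]
          ring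
        simp only [List.length_cons]
        push_cast
        rw [hcard] at IH
        nlinarith [hm.2.2]
      · rw [dif_neg hc]
        have : 1 ≤ (R.card : ℝ) := by
          have := Finset.card_pos.mpr (Finset.nonempty_of_ne_empty hR)
          exact_mod_cast this
        simp only [List.length_singleton]
        push_cast
        nlinarith

lemma greedy_blocking (hθ : 0 < θ) : ∀ R S : Finset N, S ⊆ R → ∀ y : M,
    θ ≤ (S.card : ℝ) →
    ∃ p ∈ greedy l θ R, ∃ j ∈ p.1, j ∈ S ∧ ∃ i ∈ S, l j p.1 p.2 ≤ l i S y := by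
  intro R
  induction R using Finset.strongInduction with
  | _ R ih =>
    intro S hSR y hcard
    have hSne : S.Nonempty := by
      rw [← Finset.card_pos]
      by_contra h
      push_neg at h
      interval_cases hS : S.card
      · simp [hS] at hcard; linarith
    have hRne : R ≠ ∅ := by
      rintro rfl
      exact hSne.ne_empty (Finset.subset_empty.mp hSR)
    have hScand : (S, y) ∈ cands (M := M) θ R := mem_cands.mpr ⟨hSR, hSne, hcard⟩
    have hc : (cands (M := M) θ R).Nonempty := ⟨_, hScand⟩
    rw [greedy, dif_neg hRne, dif_pos hc]
    set p := pick l θ R hc with hp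
    have hm := mem_cands.mp (pick_mem l θ R hc)
    by_cases hint : (S ∩ p.1).Nonempty
    · obtain ⟨j, hj⟩ := hint
      rw [Finset.mem_inter] at hj
      refine ⟨p, List.mem_cons_self, j, hj.2, hj.1, ?_⟩
      have h1 : l j p.1 p.2 ≤ gmax l p := by
        rw [gmax, dif_pos hm.2.1]
        exact Finset.le_sup' (fun i => l i p.1 p.2) hj.2
      have h2 : gmax l p ≤ gmax l (S, y) := pick_min l θ R hc _ hScand
      have h3 : gmax l (S, y) = S.sup' hSne (fun i => l i S y) := by
        rw [gmax, dif_pos hSne]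
      obtain ⟨i, hi, hieq⟩ := Finset.exists_max_image S (fun i => l i S y) hSne
      have h4 : S.sup' hSne (fun i => l i S y) ≤ l i S y :=
        Finset.sup'_le _ _ fun b hb => hieq b hb
      exact ⟨i, hi, by rw [h3] at h2; linarith⟩
    · have hint' : S ∩ p.1 = ∅ := Finset.not_nonempty_iff_eq_empty.mp hint
      have hdisj : S ⊆ R \ p.1 := by
        intro a ha
        refine Finset.mem_sdiff.mpr ⟨hSR ha, fun hb => ?_⟩
        have : a ∈ S ∩ p.1 := Finset.mem_inter.mpr ⟨ha, hb⟩
        simp [hint'] at this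
      obtain ⟨q, hq, rest⟩ := ih _ (Finset.sdiff_ssubset hm.1 hm.2.1) S hdisj y hcard
      exact ⟨q, List.mem_cons_of_mem _ hq, rest⟩


lemma loss_eq' {k : ℕ} (X : Clustering N M k) (l : N → Finset N → M → ℝ)
    {j : N} {t : Fin k} (hj : j ∈ X.part t) :
    X.loss l j = l j (X.part t) (X.cent t) := by
  have h1 : j ∈ X.part (X.idx j) := (X.partition j).exists.choose_spec
  obtain ⟨u, hu, huniq⟩ := X.partition j
  have : X.idx j = t := (huniq _ h1).trans (huniq t hj).symm
  rw [Clustering.loss, this]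

lemma build {k : ℕ} (l : N → Finset N → M → ℝ) (L : List (Finset N × M)) (hlen : L.length ≤ k)
    (hcov : ∀ i : N, ∃ p ∈ L, i ∈ p.1)
    (hpw : L.Pairwise fun p q => Disjoint p.1 q.1) :
    ∃ X : Clustering N M k, ∀ j : N, ∀ p ∈ L, j ∈ p.1 → X.loss l j = l j p.1 p.2 := by
  classical
  have hdisj : ∀ (a b : Fin L.length), a ≠ b → Disjoint (L.get a).1 (L.get b).1 := by
    intro a b hab
    rcases lt_or_gt_of_ne hab with h | h
    · exact List.pairwise_iff_get.mp hpw a b h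
    · exact (List.pairwise_iff_get.mp hpw b a h).symm
  set pf : Fin k → Finset N :=
    fun t => if h : (t : ℕ) < L.length then (L.get ⟨t, h⟩).1 else ∅ with hpf
  set cf : Fin k → M :=
    fun t => if h : (t : ℕ) < L.length then (L.get ⟨t, h⟩).2 else Classical.arbitrary M
    with hcf
  have hmem : ∀ (t0 : Fin L.length) (j : N), j ∈ (L.get t0).1 →
      j ∈ pf ⟨t0, lt_of_lt_of_le t0.2 hlen⟩ := by
    intro t0 j hj
    rw [hpf]
    dsimp only
    rw [dif_pos (show (t0 : ℕ) < L.length from t0.2)]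
    exact hj
  have hpartition : ∀ i : N, ∃! t : Fin k, i ∈ pf t := by
    intro i
    obtain ⟨p, hpL, hip⟩ := hcov i
    obtain ⟨t0, ht0⟩ := List.mem_iff_get.mp hpL
    have htk : (t0 : ℕ) < k := lt_of_lt_of_le t0.2 hlen
    refine ⟨⟨t0, htk⟩, hmem t0 i (by rw [ht0]; exact hip), ?_⟩
    rintro s hs
    rw [hpf] at hs
    dsimp only at hs
    by_cases h : (s : ℕ) < L.length
    · rw [dif_pos h] at hs
      by_contra hne
      have hne' : (⟨(s : ℕ), h⟩ : Fin L.length) ≠ t0 := by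
        intro he
        exact hne (Fin.ext (by simpa using congrArg Fin.val he))
      have hit0 : i ∈ (L.get t0).1 := by rw [ht0]; exact hip
      exact Finset.disjoint_left.mp (hdisj _ _ hne') hs hit0
    · rw [dif_neg h] at hs
      exact absurd hs (Finset.notMem_empty i)
  refine ⟨⟨pf, cf, hpartition⟩, ?_⟩
  intro j p hpL hjp
  obtain ⟨t0, ht0⟩ := List.mem_iff_get.mp hpL
  have htk : (t0 : ℕ) < k := lt_of_lt_of_le t0.2 hlen
  have hjpf : j ∈ pf ⟨t0, htk⟩ := hmem t0 j (by rw [ht0]; exact hjp)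
  have hloss := loss_eq' (⟨pf, cf, hpartition⟩ : Clustering N M k) l (t := ⟨t0, htk⟩) hjpf
  have hpart : pf ⟨t0, htk⟩ = p.1 := by
    rw [hpf]
    dsimp only
    rw [dif_pos (show (t0 : ℕ) < L.length from t0.2)]
    exact congrArg Prod.fst ht0
  have hcent : cf ⟨t0, htk⟩ = p.2 := by
    rw [hcf]
    dsimp only
    rw [dif_pos (show (t0 : ℕ) < L.length from t0.2)]
    exact congrArg Prod.snd ht0
  rw [hloss]
  dsimp only [Clustering.part, Clustering.cent] at *
  rw [hpart, hcent]

end Dev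


/-- For every semi-centroid clustering instance with arbitrary nonnegative loss functions,
there exists a clustering that is `1`-FJR. -/
theorem exists_one_FJR {N M : Type*} [Fintype N] [Nonempty N] [Fintype M] [Nonempty M]
    {k : ℕ} (hk : 1 ≤ k)
    (l : N → Finset N → M → ℝ) (hl : ∀ i C x, 0 ≤ l i C x) :
    ∃ X : Clustering N M k, IsFJR X l 1 := by
  classical
  set n := Fintype.card N with hn
  set θ : ℝ := (n : ℝ) / k with hθdef
  have hk0 : (0 : ℝ) < k := by exact_mod_cast hk
  have hn0 : 0 < n := Fintype.card_pos
  have hθ : 0 < θ := div_pos (by exact_mod_cast hn0) hk0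
  set L := greedy l θ (Finset.univ : Finset N) with hL
  have hlen : L.length ≤ k := by
    have h := greedy_length (l := l) hθ (Finset.univ : Finset N)
    rw [Finset.card_univ, ← hn] at h
    have hkθ : θ * k = n := div_mul_cancel₀ _ (ne_of_gt hk0)
    have h2 : θ * (L.length : ℝ) < θ * ((k : ℝ) + 1) := by
      rw [mul_add, mul_one, hkθ]; exact h
    have h3 : (L.length : ℝ) < (k : ℝ) + 1 := lt_of_mul_lt_mul_left h2 (le_of_lt hθ)
    have h4 : L.length < k + 1 := by exact_mod_cast h3
    omega
  obtain ⟨X, hX⟩ := build l L hlen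
    (fun i => (greedy_cover i Finset.univ).mpr (Finset.mem_univ i))
    (greedy_pairwise Finset.univ)
  refine ⟨X, ?_⟩
  rintro ⟨S, y, hScard, hblock⟩
  obtain ⟨p, hpL, j, hjp, hjS, i, hiS, hle⟩ :=
    greedy_blocking (l := l) hθ Finset.univ S (Finset.subset_univ S) y hScard
  have hloss := hX j p hpL hjp
  have := hblock i hiS j hjS
  rw [one_mul, hloss] at this
  linarith
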